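/- For a comb C = (H, 𝒯₁, …, 𝒯_t) with handle H ⊆ T and an odd number t ≥ 3 of pairwise disjoint teeth 𝒯_i ⊆ T, each intersecting H and not contained in H, the comb inequality x(γ(H)) + Σ_{i=1}^{t} x(γ(𝒯_i)) ≤ |H| + Σ_{i=1}^{t}|𝒯_i| − (3t+1)/2 is valid for every feasible GMDTSP solution that visits all targets of H ∪ 𝒯₁ ∪ … ∪ 𝒯_t. -/

import Mathlib

open Finset

/-- A feasible GMDTSP solution: a collection of simple cycles on the complete
target–depot graph (no depot–depot edges), each cycle containing exactly one
depot, visiting at least one target of every cluster.  `x u v` is the number of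
times the edge `{u,v}` is used (2 only on degenerate depot–target two-edge
cycles) and `y t` indicates whether target `t` is visited. -/
structure GMDTSPSol (T D : Type*) [Fintype T] [Fintype D]
    (clusters : Finset (Finset T)) where
  x : (T ⊕ D) → (T ⊕ D) → ℕ
  y : T → ℕ
  symm : ∀ u v, x u v = x v u
  loopless : ∀ u, x u u = 0
  no_depot_depot : ∀ d d' : D, x (Sum.inr d) (Sum.inr d') = 0
  xTT_le_one : ∀ t t' : T, x (Sum.inl t) (Sum.inl t') ≤ 1
  xDT_le_two : ∀ (d : D) (t : T), x (Sum.inr d) (Sum.inl t) ≤ 2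
  y_le_one : ∀ t, y t ≤ 1
  degree : ∀ t : T, ∑ v : T ⊕ D, x (Sum.inl t) v = 2 * y t
  depot_degree : ∀ d : D, ∑ v : T ⊕ D, x (Sum.inr d) v ≤ 2
  connected : ∀ t : T, y t = 1 →
    ∃ d : D, Relation.ReflTransGen (fun u v => 0 < x u v) (Sum.inl t) (Sum.inr d)
  one_depot_per_cycle : ∀ d d' : D, d ≠ d' →
    ¬ Relation.ReflTransGen (fun u v => 0 < x u v) (Sum.inr d) (Sum.inr d')
  covers : ∀ C ∈ clusters, ∃ t ∈ C, y t = 1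

/-- `x(δ(S))`: total multiplicity of solution edges crossing the cut `(S, V∖S)`,
for a set `S` of targets. -/
def cutS {T D : Type*} [Fintype T] [DecidableEq T] [Fintype D]
    {clusters : Finset (Finset T)} (sol : GMDTSPSol T D clusters)
    (S : Finset T) : ℕ :=
  ∑ a ∈ S, ((∑ b ∈ Sᶜ, sol.x (Sum.inl a) (Sum.inl b)) +
    ∑ d : D, sol.x (Sum.inl a) (Sum.inr d))

/-- `x(γ(S))`: total multiplicity of solution edges with both endpoints in the
target set `S` (each edge counted once, via ordered pairs `a < b`). -/
def xGamma {T D : Type*} [Fintype T] [LinearOrder T] [Fintype D]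
    {clusters : Finset (Finset T)} (sol : GMDTSPSol T D clusters)
    (S : Finset T) : ℕ :=
  ∑ a ∈ S, ∑ b ∈ S.filter (a < ·), sol.x (Sum.inl a) (Sum.inl b)

section Aux
set_option linter.unusedSectionVars false
variable {T D : Type*} [Fintype T] [LinearOrder T] [Fintype D]
    {clusters : Finset (Finset T)} (sol : GMDTSPSol T D clusters)

/-- edges between two target sets (ordered count) -/
def eAB (A B : Finset T) : ℕ :=
  ∑ a ∈ A, ∑ b ∈ B, sol.x (Sum.inl a) (Sum.inl b)

lemma eAB_comm (A B : Finset T) : eAB sol A B = eAB sol B A := by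
  unfold eAB
  rw [Finset.sum_comm]
  exact Finset.sum_congr rfl fun b _ => Finset.sum_congr rfl fun a _ => sol.symm _ _

lemma gamma_double (S : Finset T) : eAB sol S S = 2 * xGamma sol S := by
  unfold eAB xGamma
  have key : ∀ a ∈ S, ∑ b ∈ S, sol.x (Sum.inl a) (Sum.inl b)
      = ∑ b ∈ S.filter (a < ·), sol.x (Sum.inl a) (Sum.inl b)
        + ∑ b ∈ S.filter (· < a), sol.x (Sum.inl a) (Sum.inl b) := by
    intro a _
    rw [← Finset.sum_filter_add_sum_filter_not S (fun b => a < b)]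
    congr 1
    rw [← Finset.sum_filter_add_sum_filter_not (S.filter (fun b => ¬ a < b)) (· < a)]
    have h2 : (S.filter (fun b => ¬ a < b)).filter (· < a) = S.filter (· < a) := by
      ext b
      simp only [mem_filter]
      exact ⟨fun ⟨⟨h, _⟩, h2⟩ => ⟨h, h2⟩, fun ⟨h, h2⟩ => ⟨⟨h, asymm h2⟩, h2⟩⟩
    have h3 : ∑ b ∈ (S.filter (fun b => ¬ a < b)).filter (fun b => ¬ b < a),
        sol.x (Sum.inl a) (Sum.inl b) = 0 := by
      apply Finset.sum_eq_zero
      intro b hb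
      simp only [mem_filter, not_lt] at hb
      have : b = a := le_antisymm hb.1.2 hb.2
      subst this
      exact sol.loopless _
    rw [h2, h3, add_zero]
  rw [Finset.sum_congr rfl key, Finset.sum_add_distrib]
  have h4 : ∑ a ∈ S, ∑ b ∈ S.filter (· < a), sol.x (Sum.inl a) (Sum.inl b)
      = ∑ a ∈ S, ∑ b ∈ S.filter (a < ·), sol.x (Sum.inl a) (Sum.inl b) := by
    rw [Finset.sum_comm' (s' := fun b => S.filter (b < ·)) (t' := S)
      (by intro a b; simp only [mem_filter]; tauto)]
    exact Finset.sum_congr rfl fun b _ => Finset.sum_congr rfl fun a ha => sol.symm _ _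
  rw [h4]; ring

lemma degree_identity (S : Finset T) (hvis : ∀ a ∈ S, sol.y a = 1) :
    2 * xGamma sol S + cutS sol S = 2 * S.card := by
  have h : ∑ a ∈ S, ∑ v : T ⊕ D, sol.x (Sum.inl a) v = 2 * S.card := by
    rw [Finset.sum_congr rfl (fun a ha => sol.degree a)]
    rw [Finset.sum_congr rfl (fun a ha => by rw [hvis a ha])]
    simp [Finset.sum_const, mul_comm]
  have hsplit : ∀ a ∈ S, ∑ v : T ⊕ D, sol.x (Sum.inl a) v
      = (∑ b ∈ S, sol.x (Sum.inl a) (Sum.inl b))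
        + ((∑ b ∈ Sᶜ, sol.x (Sum.inl a) (Sum.inl b))
          + ∑ d : D, sol.x (Sum.inl a) (Sum.inr d)) := by
    intro a _
    rw [Fintype.sum_sum_type]
    rw [← Finset.sum_add_sum_compl S (fun b => sol.x (Sum.inl a) (Sum.inl b))]
    ring
  rw [Finset.sum_congr rfl hsplit, Finset.sum_add_distrib] at h
  rw [← gamma_double, eAB, cutS] at *
  omega

lemma cut_parity (S : Finset T) : 2 ∣ (2 * xGamma sol S + cutS sol S) := by
  have h : ∑ a ∈ S, ∑ v : T ⊕ D, sol.x (Sum.inl a) v = ∑ a ∈ S, 2 * sol.y a :=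
    Finset.sum_congr rfl (fun a ha => sol.degree a)
  have hsplit : ∀ a ∈ S, ∑ v : T ⊕ D, sol.x (Sum.inl a) v
      = (∑ b ∈ S, sol.x (Sum.inl a) (Sum.inl b))
        + ((∑ b ∈ Sᶜ, sol.x (Sum.inl a) (Sum.inl b))
          + ∑ d : D, sol.x (Sum.inl a) (Sum.inr d)) := by
    intro a _
    rw [Fintype.sum_sum_type]
    rw [← Finset.sum_add_sum_compl S (fun b => sol.x (Sum.inl a) (Sum.inl b))]
    ring
  rw [Finset.sum_congr rfl hsplit, Finset.sum_add_distrib] at h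
  rw [← Finset.mul_sum] at h
  rw [← gamma_double, eAB, cutS] at *
  omega

lemma cut_even (S : Finset T) : 2 ∣ cutS sol S := by
  have := cut_parity sol S; omega

lemma no_escape (S : Finset T) (h0 : cutS sol S = 0) {u v : T ⊕ D}
    (hr : Relation.ReflTransGen (fun u v => 0 < sol.x u v) u v)
    (hu : ∃ a ∈ S, u = Sum.inl a) : ∃ a ∈ S, v = Sum.inl a := by
  have hz : ∀ a ∈ S, ((∑ b ∈ Sᶜ, sol.x (Sum.inl a) (Sum.inl b)) +
      ∑ d : D, sol.x (Sum.inl a) (Sum.inr d)) = 0 :=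
    (Finset.sum_eq_zero_iff).mp h0
  induction hr with
  | refl => exact hu
  | @tail m c _ step ih =>
    obtain ⟨a, ha, rfl⟩ := ih
    have hza := hz a ha
    have h1' : ∑ b ∈ Sᶜ, sol.x (Sum.inl a) (Sum.inl b) = 0 := by omega
    have h1 : ∀ b ∈ Sᶜ, sol.x (Sum.inl a) (Sum.inl b) = 0 :=
      Finset.sum_eq_zero_iff.mp h1'
    have h2' : ∑ d : D, sol.x (Sum.inl a) (Sum.inr d) = 0 := by omega
    have h2 : ∀ d : D, sol.x (Sum.inl a) (Sum.inr d) = 0 := fun d =>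
      Finset.sum_eq_zero_iff.mp h2' d (Finset.mem_univ d)
    rcases c with b | d
    · by_cases hb : b ∈ S
      · exact ⟨b, hb, rfl⟩
      · exact absurd (h1 b (Finset.mem_compl.mpr hb)) (by omega)
    · exact absurd (h2 d) (by omega)

lemma cut_pos (S : Finset T) {v : T} (hv : v ∈ S) (hy : sol.y v = 1) :
    0 < cutS sol S := by
  rcases Nat.eq_zero_or_pos (cutS sol S) with h0 | h
  · obtain ⟨d, hd⟩ := sol.connected v hy
    obtain ⟨a, _, hav⟩ := no_escape sol S h0 hd ⟨v, hv, rfl⟩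
    exact absurd hav (by simp)
  · exact h

lemma cut_ge_two (S : Finset T) {v : T} (hv : v ∈ S) (hy : sol.y v = 1) :
    2 ≤ cutS sol S := by
  have h1 := cut_pos sol S hv hy
  have h2 := cut_even sol S
  omega

lemma cut_union (A B : Finset T) (hAB : Disjoint A B) :
    cutS sol A + cutS sol B = cutS sol (A ∪ B) + 2 * eAB sol A B := by
  have hcA : Aᶜ = (A ∪ B)ᶜ ∪ B := by
    ext b
    simp only [mem_compl, mem_union]
    constructor
    · intro h; by_cases hb : b ∈ B
      · exact Or.inr hb
      · exact Or.inl (by tauto)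
    · rintro (h | h)
      · tauto
      · exact fun hA => (Finset.disjoint_left.mp hAB hA) h
    
  have hcB : Bᶜ = (A ∪ B)ᶜ ∪ A := by
    ext b
    simp only [mem_compl, mem_union]
    constructor
    · intro h; by_cases hb : b ∈ A
      · exact Or.inr hb
      · exact Or.inl (by tauto)
    · rintro (h | h)
      · tauto
      · exact fun hB => (Finset.disjoint_left.mp hAB h) hB
  have hd1 : Disjoint ((A ∪ B)ᶜ) B :=
    Finset.disjoint_left.mpr fun b hb => by simp at hb; tauto
  have hd2 : Disjoint ((A ∪ B)ᶜ) A :=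
    Finset.disjoint_left.mpr fun b hb => by simp at hb; tauto
  unfold cutS eAB
  rw [Finset.sum_union hAB]
  have e1 : ∀ a ∈ A, ((∑ b ∈ Aᶜ, sol.x (Sum.inl a) (Sum.inl b)) +
      ∑ d : D, sol.x (Sum.inl a) (Sum.inr d))
      = ((∑ b ∈ (A ∪ B)ᶜ, sol.x (Sum.inl a) (Sum.inl b)) +
      ∑ d : D, sol.x (Sum.inl a) (Sum.inr d)) + ∑ b ∈ B, sol.x (Sum.inl a) (Sum.inl b) := by
    intro a _
    rw [hcA, Finset.sum_union hd1]; ring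
  have e2 : ∀ a ∈ B, ((∑ b ∈ Bᶜ, sol.x (Sum.inl a) (Sum.inl b)) +
      ∑ d : D, sol.x (Sum.inl a) (Sum.inr d))
      = ((∑ b ∈ (A ∪ B)ᶜ, sol.x (Sum.inl a) (Sum.inl b)) +
      ∑ d : D, sol.x (Sum.inl a) (Sum.inr d)) + ∑ b ∈ A, sol.x (Sum.inl a) (Sum.inl b) := by
    intro a _
    rw [hcB, Finset.sum_union hd2]; ring
  rw [Finset.sum_congr rfl e1, Finset.sum_congr rfl e2]
  simp only [Finset.sum_add_distrib]
  have : ∑ a ∈ B, ∑ b ∈ A, sol.x (Sum.inl a) (Sum.inl b)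
      = ∑ a ∈ A, ∑ b ∈ B, sol.x (Sum.inl a) (Sum.inl b) := by
    have := eAB_comm sol A B
    unfold eAB at this
    omega
  omega

end Aux

/-- For a comb with handle `H ⊆ T` and an odd number `t ≥ 3`
of pairwise disjoint teeth `𝒯_i ⊆ T`, each meeting `H` and not contained in
`H`, the comb inequality
`x(γ(H)) + Σ_i x(γ(𝒯_i)) ≤ |H| + Σ_i |𝒯_i| − (3t+1)/2`
is valid for every feasible GMDTSP solution visiting all targets of
`H ∪ 𝒯₁ ∪ … ∪ 𝒯_t`. -/
theorem comb_valid {T D : Type*} [Fintype T] [LinearOrder T] [Fintype D]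
    (clusters : Finset (Finset T)) (sol : GMDTSPSol T D clusters)
    (t : ℕ) (htodd : Odd t) (ht : 3 ≤ t)
    (H : Finset T) (𝒯 : Fin t → Finset T)
    (hHT : ∀ i, (H ∩ 𝒯 i).Nonempty)
    (hTH : ∀ i, (𝒯 i \ H).Nonempty)
    (hdisj : ∀ i j, i ≠ j → Disjoint (𝒯 i) (𝒯 j))
    (hvisit : ∀ v : T, (v ∈ H ∨ ∃ i, v ∈ 𝒯 i) → sol.y v = 1) :
    (xGamma sol H : ℤ) + ∑ i, (xGamma sol (𝒯 i) : ℤ) ≤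
      (H.card : ℤ) + (∑ i, ((𝒯 i).card : ℤ)) - (3 * t + 1) / 2 := by
  classical
  set A : Fin t → Finset T := fun i => 𝒯 i ∩ H with hA
  set B : Fin t → Finset T := fun i => 𝒯 i \ H with hB
  have hABd : ∀ i, Disjoint (A i) (B i) := fun i =>
    Finset.disjoint_left.mpr fun a ha hb => by
      simp only [hA, hB, mem_inter, mem_sdiff] at ha hb
      exact hb.2 ha.2
  have hABu : ∀ i, A i ∪ B i = 𝒯 i := fun i => by
    ext a; simp only [hA, hB, mem_union, mem_inter, mem_sdiff]; tauto
  have hcutT : ∀ i, 2 ≤ cutS sol (𝒯 i) := fun i => by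
    obtain ⟨v, hv⟩ := hHT i
    have hv' : v ∈ 𝒯 i := (Finset.mem_inter.mp hv).2
    exact cut_ge_two sol _ hv' (hvisit v (Or.inr ⟨i, hv'⟩))
  have hcutA : ∀ i, 2 ≤ cutS sol (A i) := fun i => by
    obtain ⟨v, hv⟩ := hHT i
    have hv' : v ∈ A i := by simp only [hA, mem_inter] at *; tauto
    exact cut_ge_two sol _ hv' (hvisit v (Or.inl (Finset.mem_inter.mp hv).1))
  have hcutB : ∀ i, 2 ≤ cutS sol (B i) := fun i => by
    obtain ⟨v, hv⟩ := hTH i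
    exact cut_ge_two sol _ hv
      (hvisit v (Or.inr ⟨i, (Finset.mem_sdiff.mp hv).1⟩))
  have hkey : ∀ i, 3 ≤ cutS sol (𝒯 i) + eAB sol (A i) (B i) := fun i => by
    have hcu := cut_union sol (A i) (B i) (hABd i)
    rw [hABu i] at hcu
    have h1 := hcutA i; have h2 := hcutB i; have h3 := hcutT i
    omega
  have hsum3 : 3 * t ≤ (∑ i, cutS sol (𝒯 i)) + ∑ i, eAB sol (A i) (B i) := by
    rw [← Finset.sum_add_distrib]
    calc 3 * t = ∑ _i : Fin t, 3 := by simp [mul_comm]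
      _ ≤ _ := Finset.sum_le_sum fun i _ => hkey i
  have hEH : ∑ i, eAB sol (A i) (B i) ≤ cutS sol H := by
    have h1 : ∀ i : Fin t, eAB sol (A i) (B i)
        ≤ ∑ a ∈ A i, ∑ b ∈ Hᶜ, sol.x (Sum.inl a) (Sum.inl b) := by
      intro i
      refine Finset.sum_le_sum fun a _ => Finset.sum_le_sum_of_subset ?_
      intro b hb
      simp only [hB, mem_sdiff] at hb
      exact Finset.mem_compl.mpr hb.2
    have hpd : ((Finset.univ : Finset (Fin t)) : Set (Fin t)).PairwiseDisjoint A := by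
      intro i _ j _ hij
      exact Finset.disjoint_left.mpr fun a hai haj => by
        simp only [hA, mem_inter] at hai haj
        exact Finset.disjoint_left.mp (hdisj i j hij) hai.1 haj.1
    calc ∑ i, eAB sol (A i) (B i)
        ≤ ∑ i, ∑ a ∈ A i, ∑ b ∈ Hᶜ, sol.x (Sum.inl a) (Sum.inl b) :=
          Finset.sum_le_sum fun i _ => h1 i
      _ = ∑ a ∈ Finset.univ.biUnion A, ∑ b ∈ Hᶜ, sol.x (Sum.inl a) (Sum.inl b) :=
          (Finset.sum_biUnion hpd).symm
      _ ≤ ∑ a ∈ H, ∑ b ∈ Hᶜ, sol.x (Sum.inl a) (Sum.inl b) := by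
          refine Finset.sum_le_sum_of_subset ?_
          intro a ha
          obtain ⟨i, _, hai⟩ := Finset.mem_biUnion.mp ha
          exact (Finset.mem_inter.mp hai).2
      _ ≤ cutS sol H := Finset.sum_le_sum fun a _ => Nat.le_add_right _ _
  have hbig : 3 * t + 1 ≤ cutS sol H + ∑ i, cutS sol (𝒯 i) := by
    have h30 : 3 * t ≤ cutS sol H + ∑ i, cutS sol (𝒯 i) := by omega
    have he1 : 2 ∣ cutS sol H := cut_even sol H
    have he2 : 2 ∣ ∑ i, cutS sol (𝒯 i) :=
      Finset.dvd_sum fun i _ => cut_even sol (𝒯 i)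
    obtain ⟨k, rfl⟩ := htodd
    omega
  have hidH : 2 * xGamma sol H + cutS sol H = 2 * H.card :=
    degree_identity sol H fun a ha => hvisit a (Or.inl ha)
  have hidT : 2 * ∑ i, xGamma sol (𝒯 i) + ∑ i, cutS sol (𝒯 i)
      = 2 * ∑ i, (𝒯 i).card := by
    rw [Finset.mul_sum, Finset.mul_sum, ← Finset.sum_add_distrib]
    exact Finset.sum_congr rfl fun i _ =>
      degree_identity sol (𝒯 i) fun a ha => hvisit a (Or.inr ⟨i, ha⟩)
  rw [← Nat.cast_sum, ← Nat.cast_sum]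
  omega
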